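/- Let K be a finite field with q elements. Let e = (e^0, ..., e^ν) and r = (r^0, ..., r^ν) be sequences of non-negative integers, and let X be the representation of the linearly oriented quiver A_{ν+1} given by surjective linear maps K^{e^ν + r^0} ↠ K^{e^{ν-1} + r^1} ↠ ... ↠ K^{e^0 + r^ν}. Then X has a subrepresentation of dimension vector (r^0, r^1, ..., r^ν) if and only if e^0 ≥ 0 and e^i ≤ e^{i+1} for all i; moreover, when this holds, the number of such subrepresentations equals ∏_{i=0}^ν [e^{ν-i} - e^{ν-i-1} + r^i choose r^i]_q (with e^{-1} := 0). -/

import Mathlib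

def gaussChoose (q : ℕ) : ℕ → ℕ → ℕ
  | _, 0 => 1
  | 0, _ + 1 => 0
  | n + 1, k + 1 => gaussChoose q n k + q ^ (k + 1) * gaussChoose q n (k + 1)

lemma gaussChoose_zero (q n : ℕ) : gaussChoose q n 0 = 1 := by cases n <;> rfl

lemma gaussChoose_zero_succ (q k : ℕ) : gaussChoose q 0 (k + 1) = 0 := rfl

lemma gaussChoose_succ_succ (q n k : ℕ) :
    gaussChoose q (n + 1) (k + 1) =
      gaussChoose q n k + q ^ (k + 1) * gaussChoose q n (k + 1) := rfl

lemma gaussChoose_eq_zero {q n k : ℕ} (h : n < k) : gaussChoose q n k = 0 := by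
  induction n generalizing k with
  | zero => rcases k with _ | k; · omega
            rfl
  | succ n ih =>
    rcases k with _ | k; · omega
    rw [gaussChoose_succ_succ, ih (by omega), ih (by omega)]
    ring

lemma gaussChoose_pos {q n k : ℕ} (h : k ≤ n) : 0 < gaussChoose q n k := by
  induction n generalizing k with
  | zero => interval_cases k; simp [gaussChoose_zero]
  | succ n ih =>
    rcases k with _ | k
    · simp [gaussChoose_zero]
    · rw [gaussChoose_succ_succ]
      exact Nat.lt_of_lt_of_le (ih (by omega)) (Nat.le_add_right _ _)

lemma prod_pow_sub_eq_zero {q k : ℕ} (n : ℕ) (h : n < k) :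
    ∏ i ∈ Finset.range k, (q ^ n - q ^ i) = 0 := by
  apply Finset.prod_eq_zero (Finset.mem_range.mpr h)
  simp

lemma prod_pow_sub_succ (q m l : ℕ) :
    ∏ i ∈ Finset.range (l + 1), (q ^ (m + 1) - q ^ i) =
      (q ^ (m + 1) - 1) * q ^ l * ∏ i ∈ Finset.range l, (q ^ m - q ^ i) := by
  rw [Finset.prod_range_succ', pow_zero]
  have : ∀ i ∈ Finset.range l, (q ^ (m + 1) - q ^ (i + 1)) = q * (q ^ m - q ^ i) := by
    intro i _
    rw [Nat.mul_sub, ← pow_succ', ← pow_succ']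
  rw [Finset.prod_congr rfl this, Finset.prod_mul_distrib, Finset.prod_const,
    Finset.card_range]
  ring

lemma gaussChoose_mul_prod (q n k : ℕ) :
    gaussChoose q n k * ∏ i ∈ Finset.range k, (q ^ k - q ^ i) =
      ∏ i ∈ Finset.range k, (q ^ n - q ^ i) := by
  induction n generalizing k with
  | zero =>
    rcases k with _ | k
    · simp [gaussChoose_zero]
    · rw [gaussChoose_zero_succ, zero_mul, prod_pow_sub_eq_zero 0 (by omega)]
  | succ n ih =>
    rcases k with _ | k
    · simp [gaussChoose_zero]
    rcases le_or_gt (k + 1) (n + 1) with hk | hk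
    · rw [gaussChoose_succ_succ, add_mul, mul_assoc (q ^ (k+1)), ih (k + 1),
        prod_pow_sub_succ q k k, prod_pow_sub_succ q n k, mul_comm (gaussChoose q n k),
        mul_assoc ((q ^ (k+1) - 1) * q ^ k),
        mul_comm (∏ i ∈ Finset.range k, (q ^ k - q ^ i)) (gaussChoose q n k), ih k,
        Finset.prod_range_succ]
      rcases Nat.eq_zero_or_pos q with rfl | hq
      · rcases Nat.eq_zero_or_pos k with rfl | hk0
        · simp
        · have hb : (0:ℕ) ^ k = 0 := zero_pow (by omega)
          simp [hb, zero_pow (n := k + 1) (by omega), zero_pow (n := n + 1) (by omega)]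
      · have h1 : 1 ≤ q ^ (k + 1) := Nat.one_le_pow _ _ hq
        have h2 : q ^ k ≤ q ^ n := Nat.pow_le_pow_right hq (by omega)
        have h3 : 1 ≤ q ^ (n + 1) := Nat.one_le_pow _ _ hq
        zify [h1, h2, h3]
        ring
    · rw [gaussChoose_eq_zero hk, zero_mul, prod_pow_sub_eq_zero (n+1) (by omega)]

open Module Submodule

section Grass
variable {K V : Type*} [Field K] [Fintype K] [AddCommGroup V] [Module K V]
  [FiniteDimensional K V]

lemma card_grassmannian (k : ℕ) :
    Nat.card {U : Submodule K V // Module.finrank K U = k} =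
      gaussChoose (Fintype.card K) (Module.finrank K V) k := by
  classical
  have hV : Finite V := Module.finite_of_finite K
  have hSub : Finite (Submodule K V) :=
    Finite.of_injective (fun U => (U : Set V)) SetLike.coe_injective
  rcases lt_or_ge (Module.finrank K V) k with h | hk
  · have : IsEmpty {U : Submodule K V // Module.finrank K U = k} := by
      refine ⟨fun U => absurd (U.2 ▸ U.1.finrank_le) (by omega)⟩
    rw [Nat.card_of_isEmpty, gaussChoose_eq_zero h]
  · set Φ : {s : Fin k → V // LinearIndependent K s} →
        {U : Submodule K V // Module.finrank K U = k} :=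
      fun s => ⟨span K (Set.range s.1), by
        rw [finrank_span_eq_card s.2, Fintype.card_fin]⟩ with hΦ
    have fibEquiv : ∀ U : {U : Submodule K V // Module.finrank K U = k},
        {s : {s : Fin k → V // LinearIndependent K s} // Φ s = U} ≃
          {t : Fin k → U.1 // LinearIndependent K t} := by
      intro U
      refine
        { toFun := fun s => ⟨fun i => ⟨s.1.1 i, ?_⟩, ?_⟩
          invFun := fun t => ⟨⟨fun i => (t.1 i : V), t.2.map' U.1.subtype (ker_subtype _)⟩, ?_⟩
          left_inv := fun s => Subtype.ext (Subtype.ext (funext fun i => rfl))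
          right_inv := fun t => Subtype.ext (funext fun i => Subtype.ext rfl) }
      · have h1 : s.1.1 i ∈ span K (Set.range s.1.1) := subset_span (Set.mem_range_self i)
        have h2 : span K (Set.range s.1.1) = U.1 := congrArg Subtype.val s.2
        exact h2 ▸ h1
      · exact (s.1.2.of_comp U.1.subtype)
      · apply Subtype.ext
        show span K (Set.range fun i => (t.1 i : V)) = U.1
        have hspan : span K (Set.range t.1) = ⊤ := by
          apply Submodule.eq_top_of_finrank_eq
          rw [finrank_span_eq_card t.2, Fintype.card_fin, U.2]
        have hr : (Set.range fun i => (t.1 i : V)) = U.1.subtype '' Set.range t.1 := by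
          rw [← Set.range_comp]; rfl
        rw [hr, ← Submodule.map_span, hspan, Submodule.map_subtype_top]
    have key := card_linearIndependent (K := K) (V := V) (k := k) hk
    have hfib : ∀ U, Nat.card {s : {s : Fin k → V // LinearIndependent K s} // Φ s = U} =
        ∏ i ∈ Finset.range k, (Fintype.card K ^ k - Fintype.card K ^ i) := by
      intro U
      rw [Nat.card_congr (fibEquiv U)]
      have hU : Module.finrank K U.1 = k := U.2
      have h3 := card_linearIndependent (K := K) (V := U.1) (k := k) (le_of_eq hU.symm)
      rw [h3, hU, Finset.prod_range fun i => (Fintype.card K ^ k - Fintype.card K ^ i)]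
    have hsum : Nat.card {s : Fin k → V // LinearIndependent K s} =
        Nat.card {U : Submodule K V // Module.finrank K U = k} *
          ∏ i ∈ Finset.range k, (Fintype.card K ^ k - Fintype.card K ^ i) := by
      rw [← Nat.card_congr (Equiv.sigmaFiberEquiv Φ)]
      cases nonempty_fintype {U : Submodule K V // Module.finrank K U = k}
      have : Finite {s : Fin k → V // LinearIndependent K s} := inferInstance
      cases nonempty_fintype {s : Fin k → V // LinearIndependent K s}
      rw [Nat.card_eq_fintype_card, Fintype.card_sigma]
      have : ∀ U ∈ Finset.univ, Fintype.card
          {s : {s : Fin k → V // LinearIndependent K s} // Φ s = U} =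
          ∏ i ∈ Finset.range k, (Fintype.card K ^ k - Fintype.card K ^ i) := by
        intro U _
        rw [← Nat.card_eq_fintype_card, hfib U]
      rw [Finset.sum_congr rfl this, Finset.sum_const, Finset.card_univ, smul_eq_mul,
        Nat.card_eq_fintype_card]
    rw [key] at hsum
    have hpos : 0 < ∏ i ∈ Finset.range k, (Fintype.card K ^ k - Fintype.card K ^ i) := by
      apply Finset.prod_pos
      intro i hi
      have : Fintype.card K ^ i < Fintype.card K ^ k :=
        Nat.pow_lt_pow_right Fintype.one_lt_card (Finset.mem_range.mp hi)
      omega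
    apply Nat.eq_of_mul_eq_mul_right hpos
    rw [gaussChoose_mul_prod, ← hsum,
      Finset.prod_range fun i => (Fintype.card K ^ Module.finrank K V - Fintype.card K ^ i)]





lemma card_subspaces_le {K V : Type*} [Field K] [Fintype K] [AddCommGroup V] [Module K V]
    [FiniteDimensional K V] (P : Submodule K V) (k : ℕ) :
    Nat.card {U : Submodule K V // Module.finrank K U = k ∧ U ≤ P} =
      gaussChoose (Fintype.card K) (Module.finrank K P) k := by
  rw [← card_grassmannian (K := K) (V := P) k]
  apply Nat.card_congr
  refine
    { toFun := fun U => ⟨U.1.comap P.subtype, by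
        rw [(Submodule.comapSubtypeEquivOfLe U.2.2).finrank_eq, U.2.1]⟩
      invFun := fun U' => ⟨U'.1.map P.subtype,
        by rw [← (Submodule.equivMapOfInjective P.subtype P.injective_subtype U'.1).finrank_eq,
          U'.2],
        map_subtype_le P U'.1⟩
      left_inv := fun U => Subtype.ext (by
        show map P.subtype (comap P.subtype U.1) = U.1
        rw [Submodule.map_comap_subtype]
        exact inf_eq_right.mpr U.2.2)
      right_inv := fun U' => Subtype.ext
        (Submodule.comap_map_eq_of_injective P.injective_subtype U'.1) }


lemma finrank_comap_add {K V W : Type*} [Field K] [AddCommGroup V] [Module K V]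
    [AddCommGroup W] [Module K W] [FiniteDimensional K V]
    (f : V →ₗ[K] W) (hf : Function.Surjective f) (T : Submodule K W) :
    Module.finrank K (T.comap f) + Module.finrank K W =
      Module.finrank K V + Module.finrank K T := by
  have hfd : FiniteDimensional K W := Module.Finite.of_surjective f hf
  have hle : LinearMap.ker f ≤ T.comap f := fun x hx => by
    simp only [Submodule.mem_comap, LinearMap.mem_ker.mp hx]
    exact T.zero_mem
  set g : T.comap f →ₗ[K] T := f.restrict (fun x hx => hx) with hg
  have hgsurj : Function.Surjective g := by
    rintro ⟨t, ht⟩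
    obtain ⟨x, rfl⟩ := hf t
    exact ⟨⟨x, ht⟩, rfl⟩
  have h1 : Module.finrank K (LinearMap.range g) + Module.finrank K (LinearMap.ker g) =
      Module.finrank K (T.comap f) := LinearMap.finrank_range_add_finrank_ker g
  have h2 : Module.finrank K (LinearMap.range g) = Module.finrank K T := by
    rw [LinearMap.range_eq_top.mpr hgsurj, finrank_top]
  have h3 : Module.finrank K (LinearMap.ker g) = Module.finrank K (LinearMap.ker f) := by
    rw [hg, LinearMap.ker_restrict]
    exact (Submodule.comapSubtypeEquivOfLe hle).finrank_eq
  have h4 : Module.finrank K (LinearMap.range f) + Module.finrank K (LinearMap.ker f) =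
      Module.finrank K V := LinearMap.finrank_range_add_finrank_ker f
  have h5 : Module.finrank K (LinearMap.range f) = Module.finrank K W := by
    rw [LinearMap.range_eq_top.mpr hf, finrank_top]
  omega

lemma nat_card_sigma_const {α : Type*} [Finite α] (β : α → Type*) [∀ a, Finite (β a)] (c : ℕ)
    (h : ∀ a, Nat.card (β a) = c) : Nat.card (Σ a, β a) = Nat.card α * c := by
  classical
  cases nonempty_fintype α
  have := fun a => Fintype.ofFinite (β a)
  rw [Nat.card_eq_fintype_card, Fintype.card_sigma]
  have h2 : ∀ a ∈ Finset.univ, Fintype.card (β a) = c := fun a _ => by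
    rw [← Nat.card_eq_fintype_card, h a]
  rw [Finset.sum_congr rfl h2, Finset.sum_const, Finset.card_univ, smul_eq_mul,
    Nat.card_eq_fintype_card]

lemma finite_submodule (K V : Type*) [Field K] [Fintype K] [AddCommGroup V] [Module K V]
    [FiniteDimensional K V] : Finite (Submodule K V) := by
  have : Finite V := Module.finite_of_finite K
  exact Finite.of_injective (fun U => (U : Set V)) SetLike.coe_injective

lemma card_chain (K : Type) [Field K] [Fintype K] :
    ∀ (ν : ℕ) (d : ℕ → ℕ)
      (f : ∀ i : ℕ, (Fin (d i) → K) →ₗ[K] (Fin (d (i+1)) → K))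
      (_ : ∀ i, i < ν → Function.Surjective (f i)) (r : ℕ → ℕ),
    Nat.card {U : ∀ i : Fin (ν+1), Submodule K (Fin (d i) → K) //
        (∀ i, Module.finrank K (U i) = r (i : ℕ)) ∧
        (∀ i : Fin ν, (U i.castSucc).map (f (i : ℕ)) ≤ U i.succ)} =
      ∏ i ∈ Finset.range (ν+1),
        gaussChoose (Fintype.card K) (if i < ν then d i - d (i+1) + r (i+1) else d i) (r i) := by
  intro ν
  induction ν with
  | zero =>
    intro d f hf r
    have e : {U : ∀ i : Fin 1, Submodule K (Fin (d i) → K) //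
        (∀ i, Module.finrank K (U i) = r (i : ℕ)) ∧
        (∀ i : Fin 0, (U i.castSucc).map (f (i : ℕ)) ≤ U i.succ)} ≃
        {W : Submodule K (Fin (d 0) → K) // Module.finrank K W = r 0} :=
      { toFun := fun U => ⟨U.1 0, U.2.1 0⟩
        invFun := fun W => ⟨fun i => Fin.cases W.1 (fun j => j.elim0) i, fun i => by
          induction i using Fin.cases with
          | zero => exact W.2
          | succ j => exact j.elim0, fun i => i.elim0⟩
        left_inv := fun U => Subtype.ext (funext fun i => by
          induction i using Fin.cases with
          | zero => simp
          | succ j => exact j.elim0)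
        right_inv := fun W => Subtype.ext (by simp) }
    rw [Nat.card_congr e, card_grassmannian, Finset.prod_range_one]
    simp [Module.finrank_fin_fun]
  | succ ν ih =>
    intro d f hf r
    have hf' : ∀ i, i < ν → Function.Surjective (f (i+1)) := fun i hi => hf (i+1) (by omega)
    have IH := ih (fun i => d (i+1)) (fun i => f (i+1)) hf' (fun i => r (i+1))
    haveI : ∀ n : ℕ, Finite (Submodule K (Fin n → K)) :=
      fun n => finite_submodule K (Fin n → K)
    set S := {U : ∀ i : Fin (ν+2), Submodule K (Fin (d i) → K) //
        (∀ i, Module.finrank K (U i) = r (i : ℕ)) ∧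
        (∀ i : Fin (ν+1), (U i.castSucc).map (f (i : ℕ)) ≤ U i.succ)} with hS
    set T := {U : ∀ i : Fin (ν+1), Submodule K (Fin (d ((i : ℕ)+1)) → K) //
        (∀ i, Module.finrank K (U i) = r ((i : ℕ)+1)) ∧
        (∀ i : Fin ν, (U i.castSucc).map (f ((i : ℕ)+1)) ≤ U i.succ)} with hT
    set π : S → T := fun U => ⟨fun i => U.1 i.succ, fun i => U.2.1 i.succ,
      fun i => U.2.2 i.succ⟩ with hπ
    have e2 : ∀ u : T, {s : S // π s = u} ≃
        {W : Submodule K (Fin (d 0) → K) //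
          Module.finrank K W = r 0 ∧ W ≤ (u.1 0).comap (f 0)} := by
      intro u
      refine
        { toFun := fun s => ⟨s.1.1 0, s.1.2.1 0, ?_⟩
          invFun := fun W => ⟨⟨fun i => Fin.cases W.1 (fun j => u.1 j) i, ?_, ?_⟩, ?_⟩
          left_inv := fun s => ?_
          right_inv := fun W => Subtype.ext (by rfl) }
      · have hval : ∀ j : Fin (ν+1), s.1.1 j.succ = u.1 j :=
          fun j => congrFun (congrArg Subtype.val s.2) j
        have h0 := s.1.2.2 0
        rw [hval 0] at h0
        exact Submodule.map_le_iff_le_comap.mp h0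
      · intro i
        induction i using Fin.cases with
        | zero => exact W.2.1
        | succ j => exact u.2.1 j
      · intro i
        induction i using Fin.cases with
        | zero =>
          exact Submodule.map_le_iff_le_comap.mpr W.2.2
        | succ j =>
          have := u.2.2 j
          simp only [← Fin.succ_castSucc, Fin.cases_succ, Fin.coe_castSucc, Fin.val_succ]
          exact this
      · apply Subtype.ext
        funext i
        simp [hπ]
        rfl
      · have hval : ∀ j : Fin (ν+1), s.1.1 j.succ = u.1 j :=
          fun j => congrFun (congrArg Subtype.val s.2) j
        apply Subtype.ext
        apply Subtype.ext
        funext i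
        induction i using Fin.cases with
        | zero => rfl
        | succ j => simpa using (hval j).symm
    have hfib : ∀ u : T, Nat.card {s : S // π s = u} =
        gaussChoose (Fintype.card K) (d 0 - d 1 + r 1) (r 0) := by
      intro u
      rw [Nat.card_congr (e2 u), card_subspaces_le]
      congr 1
      show Module.finrank K ((u.1 0).comap (f 0)) = d 0 - d 1 + r 1
      have h1 : Module.finrank K ((u.1 0).comap (f 0)) +
          Module.finrank K (Fin (d (0+1)) → K) =
          Module.finrank K (Fin (d 0) → K) +
          Module.finrank K (↥(u.1 0 : Submodule K (Fin (d (0+1)) → K))) :=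
        finrank_comap_add (f 0) (hf 0 (by omega)) (u.1 0)
      have h2 : Module.finrank K (↥(u.1 0 : Submodule K (Fin (d (0+1)) → K))) = r 1 :=
        u.2.1 0
      have h5 : Module.finrank K (↥(u.1 0 : Submodule K (Fin (d (0+1)) → K))) ≤
          Module.finrank K ((u.1 0).comap (f 0)) := by
        have h7 := Submodule.finrank_map_le (f 0) ((u.1 0).comap (f 0))
        erw [Submodule.map_comap_eq_of_surjective (hf 0 (by omega))] at h7; exact h7
      rw [Module.finrank_fin_fun, Module.finrank_fin_fun] at h1
      rw [h2] at h1 h5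
      have h6 : d (0 + 1) = d 1 := rfl
      omega
    rw [← Nat.card_congr (Equiv.sigmaFiberEquiv π), nat_card_sigma_const _ _ hfib, IH]
    have hsplit := Finset.prod_range_succ' (fun i => gaussChoose (Fintype.card K)
      (if i < ν + 1 then d i - d (i+1) + r (i+1) else d i) (r i)) (ν+1)
    rw [hsplit]
    have hA : (∏ i ∈ Finset.range (ν+1), gaussChoose (Fintype.card K)
        (if i + 1 < ν + 1 then d (i+1) - d (i+1+1) + r (i+1+1) else d (i+1)) (r (i+1)))
        = ∏ i ∈ Finset.range (ν+1), gaussChoose (Fintype.card K)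
          (if i < ν then d (i+1) - d (i+1+1) + r (i+1+1) else d (i+1)) (r (i+1)) :=
      Finset.prod_congr rfl fun i _ => by by_cases h : i < ν <;> simp [h]
    have hB : gaussChoose (Fintype.card K)
        (if 0 < ν + 1 then d 0 - d (0+1) + r (0+1) else d 0) (r 0)
        = gaussChoose (Fintype.card K) (d 0 - d 1 + r 1) (r 0) := by simp
    rw [hA, hB, mul_comm]


theorem count_subreps_of_injective_Arep (K : Type) [Field K] [Fintype K]
    (q : ℕ) (hq : q = Fintype.card K) (ν : ℕ) (e r : ℕ → ℕ)
    (f : ∀ i : ℕ, ((Fin (e (ν - i) + r i) → K) →ₗ[K] (Fin (e (ν - (i + 1)) + r (i + 1)) → K)))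
    (hf : ∀ i, i < ν → Function.Surjective (f i)) :
    ((∃ U : ∀ i : Fin (ν + 1), Submodule K (Fin (e (ν - (i : ℕ)) + r i) → K),
        (∀ i : Fin (ν + 1), Module.finrank K (U i) = r (i : ℕ)) ∧
        (∀ i : Fin ν, (U i.castSucc).map (f (i : ℕ)) ≤ U i.succ)) ↔
      (∀ i : ℕ, i + 1 ≤ ν → e i ≤ e (i + 1))) ∧
    ((∀ i : ℕ, i + 1 ≤ ν → e i ≤ e (i + 1)) →
      Nat.card {U : ∀ i : Fin (ν + 1), Submodule K (Fin (e (ν - (i : ℕ)) + r i) → K) //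
          (∀ i : Fin (ν + 1), Module.finrank K (U i) = r (i : ℕ)) ∧
          (∀ i : Fin ν, (U i.castSucc).map (f (i : ℕ)) ≤ U i.succ)} =
        ∏ i ∈ Finset.range (ν + 1),
          gaussChoose q (e (ν - i) - (if i = ν then 0 else e (ν - i - 1)) + r i) (r i)) := by
  subst hq
  haveI : ∀ n : ℕ, Finite (Submodule K (Fin n → K)) :=
    fun n => finite_submodule K (Fin n → K)
  have hcount : Nat.card {U : ∀ i : Fin (ν + 1), Submodule K (Fin (e (ν - (i : ℕ)) + r i) → K) //
          (∀ i : Fin (ν + 1), Module.finrank K (U i) = r (i : ℕ)) ∧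
          (∀ i : Fin ν, (U i.castSucc).map (f (i : ℕ)) ≤ U i.succ)} =
      ∏ i ∈ Finset.range (ν + 1), gaussChoose (Fintype.card K)
        (if i < ν then (e (ν - i) + r i) - (e (ν - (i+1)) + r (i+1)) + r (i+1)
          else e (ν - i) + r i) (r i) :=
    card_chain K ν (fun i => e (ν - i) + r i) f hf r
  constructor
  · constructor
    · rintro ⟨U, h1, h2⟩ j hj
      clear hcount
      have hi : ν - (j + 1) < ν := by omega
      have hc : U (⟨ν - (j + 1), hi⟩ : Fin ν).castSucc ≤ (U (⟨ν - (j + 1), hi⟩ : Fin ν).succ).comap (f (ν - (j + 1))) :=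
        Submodule.map_le_iff_le_comap.mp (h2 (⟨ν - (j + 1), hi⟩ : Fin ν))
      have hmono : Module.finrank K (U (⟨ν - (j + 1), hi⟩ : Fin ν).castSucc) ≤
          Module.finrank K ((U (⟨ν - (j + 1), hi⟩ : Fin ν).succ).comap (f (ν - (j + 1)))) := Submodule.finrank_mono hc
      have hr1 : Module.finrank K (U (⟨ν - (j + 1), hi⟩ : Fin ν).castSucc) = r (ν - (j + 1)) := h1 (⟨ν - (j + 1), hi⟩ : Fin ν).castSucc
      have hca : Module.finrank K ((U (⟨ν - (j + 1), hi⟩ : Fin ν).succ).comap (f (ν - (j + 1)))) +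
          Module.finrank K (Fin (e (ν - (ν - (j + 1) + 1)) + r (ν - (j + 1) + 1)) → K) =
          Module.finrank K (Fin (e (ν - (ν - (j + 1))) + r (ν - (j + 1))) → K) +
          Module.finrank K (U (⟨ν - (j + 1), hi⟩ : Fin ν).succ) :=
        finrank_comap_add (f (ν - (j + 1))) (hf (ν - (j + 1)) hi) (U (⟨ν - (j + 1), hi⟩ : Fin ν).succ)
      have hr2 : Module.finrank K (U (⟨ν - (j + 1), hi⟩ : Fin ν).succ) = r (ν - (j + 1) + 1) := h1 (⟨ν - (j + 1), hi⟩ : Fin ν).succ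
      have hp1 : Module.finrank K (Fin (e (ν - (ν - (j + 1) + 1)) + r (ν - (j + 1) + 1)) → K) =
          e (ν - (ν - (j + 1) + 1)) + r (ν - (j + 1) + 1) := Module.finrank_fin_fun K
      have hp2 : Module.finrank K (Fin (e (ν - (ν - (j + 1))) + r (ν - (j + 1))) → K) =
          e (ν - (ν - (j + 1))) + r (ν - (j + 1)) := Module.finrank_fin_fun K
      rw [hp1, hp2, hr2] at hca
      rw [hr1] at hmono
      have hj1 : ν - (ν - (j + 1) + 1) = j := by omega
      have hj2 : ν - (ν - (j + 1)) = j + 1 := by omega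
      have key : e (ν - (ν - (j + 1) + 1)) ≤ e (ν - (ν - (j + 1))) := by omega
      rw [hj1, hj2] at key
      exact key
    · intro h
      rcases isEmpty_or_nonempty {U : ∀ i : Fin (ν + 1),
          Submodule K (Fin (e (ν - (i : ℕ)) + r i) → K) //
          (∀ i : Fin (ν + 1), Module.finrank K (U i) = r (i : ℕ)) ∧
          (∀ i : Fin ν, (U i.castSucc).map (f (i : ℕ)) ≤ U i.succ)} with hE | hNE
      · exfalso
        have hpos : 0 < ∏ i ∈ Finset.range (ν + 1), gaussChoose (Fintype.card K)
            (if i < ν then (e (ν - i) + r i) - (e (ν - (i+1)) + r (i+1)) + r (i+1)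
              else e (ν - i) + r i) (r i) := by
          clear hcount
          apply Finset.prod_pos
          intro i hi
          rcases Nat.lt_or_ge i ν with hiv | hiv
          · rw [if_pos hiv]
            apply gaussChoose_pos
            have h1 := h (ν - (i+1)) (by omega)
            have h2 : ν - (i+1) + 1 = ν - i := by omega
            rw [h2] at h1
            omega
          · rw [if_neg (by omega)]
            exact gaussChoose_pos (Nat.le_add_left _ _)
        have hzero : Nat.card {U : ∀ i : Fin (ν + 1),
            Submodule K (Fin (e (ν - (i : ℕ)) + r i) → K) //
            (∀ i : Fin (ν + 1), Module.finrank K (U i) = r (i : ℕ)) ∧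
            (∀ i : Fin ν, (U i.castSucc).map (f (i : ℕ)) ≤ U i.succ)} = 0 :=
          Nat.card_of_isEmpty
        rw [hcount] at hzero
        exact absurd hzero hpos.ne'
      · obtain ⟨U, hU⟩ := hNE
        exact ⟨U, hU⟩
  · intro h
    rw [hcount]
    clear hcount
    refine Finset.prod_congr rfl fun i hi => ?_
    have hin : i ≤ ν := by
      have := Finset.mem_range.mp hi
      omega
    rcases Nat.lt_or_ge i ν with hiv | hiv
    · rw [if_pos hiv, if_neg (by omega : ¬ i = ν)]
      have h1 := h (ν - (i+1)) (by omega)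
      have h2 : ν - (i+1) + 1 = ν - i := by omega
      rw [h2] at h1
      have h3 : ν - i - 1 = ν - (i+1) := by omega
      rw [h3]
      have hca : Module.finrank K ((⊥ : Submodule K
            (Fin (e (ν - (i+1)) + r (i+1)) → K)).comap (f i)) +
          Module.finrank K (Fin (e (ν - (i+1)) + r (i+1)) → K) =
          Module.finrank K (Fin (e (ν - i) + r i) → K) +
          Module.finrank K (⊥ : Submodule K (Fin (e (ν - (i+1)) + r (i+1)) → K)) :=
        finrank_comap_add (f i) (hf i hiv) ⊥
      have hb : Module.finrank K (⊥ : Submodule K (Fin (e (ν - (i+1)) + r (i+1)) → K)) = 0 :=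
        finrank_bot K _
      have hp1 : Module.finrank K (Fin (e (ν - (i+1)) + r (i+1)) → K) =
          e (ν - (i+1)) + r (i+1) := Module.finrank_fin_fun K
      have hp2 : Module.finrank K (Fin (e (ν - i) + r i) → K) =
          e (ν - i) + r i := Module.finrank_fin_fun K
      congr 1
      omega
    · have hieq : i = ν := by omega
      subst hieq
      rw [if_neg (by omega), if_pos rfl]
      congr 1
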